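/- Assume GT_ℓ ~ c·ℓ^{-3/2}·8^ℓ·ℓ! with c = sqrt(17)(sqrt(17)−1)/(136·sqrt(π)). Then ∑_{j=1}^{n} C(n,j)·GT_j ~ c·sqrt(e^{1/4})·n^{-3/2}·8^n·n! as n → ∞. -/

import Mathlib

open Filter Real

noncomputable def gtC : ℝ := Real.sqrt 17 * (Real.sqrt 17 - 1) / (136 * Real.sqrt Real.pi)

noncomputable def gtD (ℓ : ℕ) : ℝ := gtC * (ℓ : ℝ) ^ (-(3 : ℝ) / 2) * 8 ^ ℓ * ℓ.factorial

lemma gtC_pos : 0 < gtC := by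
  have h1 : (1 : ℝ) < Real.sqrt 17 := by
    rw [show (1:ℝ) = Real.sqrt 1 by simp]
    exact Real.sqrt_lt_sqrt (by norm_num) (by norm_num)
  have h2 : 0 < Real.sqrt Real.pi := Real.sqrt_pos.mpr Real.pi_pos
  have h0 : (0:ℝ) < Real.sqrt 17 := by positivity
  exact div_pos (mul_pos h0 (by linarith)) (by positivity)

lemma gtD_pos {ℓ : ℕ} (h : 1 ≤ ℓ) : 0 < gtD ℓ := by
  have h1 : (0:ℝ) < (ℓ:ℝ) := by exact_mod_cast h
  have := gtC_pos
  unfold gtD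
  positivity

lemma gt_key (n k : ℕ) (hk : k < n) :
    (n.choose (n - k) : ℝ) * gtD (n - k) / gtD n
      = ((n : ℝ) / ((n - k : ℕ) : ℝ)) ^ ((3 : ℝ) / 2) * (1/8) ^ k / k.factorial := by
  have hkn : k ≤ n := hk.le
  have hj1 : 1 ≤ n - k := by omega
  have hnkk : n - (n - k) = k := Nat.sub_sub_self hkn
  have hjpos : (0:ℝ) < ((n - k : ℕ) : ℝ) := by exact_mod_cast hj1
  have hnpos : (0:ℝ) < (n : ℝ) := by exact_mod_cast (show 0 < n by omega)
  have hrj : ((n - k : ℕ) : ℝ) ^ (-(3 : ℝ) / 2) = (((n - k : ℕ) : ℝ) ^ ((3 : ℝ) / 2))⁻¹ := by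
    rw [neg_div, Real.rpow_neg hjpos.le]
  have hrn : ((n : ℕ) : ℝ) ^ (-(3 : ℝ) / 2) = (((n : ℕ) : ℝ) ^ ((3 : ℝ) / 2))⁻¹ := by
    rw [neg_div, Real.rpow_neg hnpos.le]
  have hdiv : ((n : ℝ) / ((n - k : ℕ) : ℝ)) ^ ((3 : ℝ) / 2)
      = (n : ℝ) ^ ((3 : ℝ) / 2) / ((n - k : ℕ) : ℝ) ^ ((3 : ℝ) / 2) :=
    Real.div_rpow hnpos.le hjpos.le _
  have h8 : (8 : ℝ) ^ n = 8 ^ (n - k) * 8 ^ k := by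
    rw [← pow_add]
    congr 1
    omega
  have hrjpos : (0:ℝ) < ((n - k : ℕ) : ℝ) ^ ((3 : ℝ) / 2) := Real.rpow_pos_of_pos hjpos _
  have hrnpos : (0:ℝ) < ((n : ℕ) : ℝ) ^ ((3 : ℝ) / 2) := Real.rpow_pos_of_pos hnpos _
  have hfj : (0:ℝ) < ((n - k).factorial : ℝ) := by exact_mod_cast (n - k).factorial_pos
  have hfn : (0:ℝ) < (n.factorial : ℝ) := by exact_mod_cast n.factorial_pos
  have hfk : (0:ℝ) < (k.factorial : ℝ) := by exact_mod_cast k.factorial_pos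
  rw [Nat.cast_choose ℝ (Nat.sub_le n k), hnkk]
  unfold gtD
  rw [hrj, hrn, hdiv, h8]
  have hc := gtC_pos
  have ha : (0:ℝ) < 8 ^ (n - k) := by positivity
  have hb : (0:ℝ) < (8:ℝ) ^ k := by positivity
  rw [show ((1:ℝ)/8) ^ k = ((8:ℝ) ^ k)⁻¹ by rw [one_div, inv_pow]]
  generalize hA : ((8:ℝ)) ^ (n - k) = a at ha ⊢
  generalize hB : ((8:ℝ)) ^ k = b at hb ⊢
  have hX : (0:ℝ) < ((n:ℝ) - (k:ℝ)) ^ ((3:ℝ)/2) := by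
    rw [← Nat.cast_sub hkn]; exact hrjpos
  field_simp [hc.ne', hfn.ne', hfj.ne', hfk.ne', ha.ne', hb.ne', hrnpos.ne', hX.ne']

noncomputable def gtF (GT : ℕ → ℝ) (n k : ℕ) : ℝ :=
  if k < n then (n.choose (n - k) : ℝ) * GT (n - k) / gtD n else 0

lemma gt_sum_eq (GT : ℕ → ℝ) (n : ℕ) :
    (∑ j ∈ Finset.Icc 1 n, (n.choose j : ℝ) * GT j) / gtD n = ∑' k, gtF GT n k := by
  rw [tsum_eq_sum (s := Finset.range n)
    (fun k hk => by
      simp only [Finset.mem_range, not_lt] at hk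
      simp only [gtF]
      rw [if_neg (by omega)])]
  have hterm : ∀ k ∈ Finset.range n,
      gtF GT n k = (n.choose (n - k) : ℝ) * GT (n - k) / gtD n := fun k hk => by
    simp only [gtF]
    rw [if_pos (Finset.mem_range.mp hk)]
  rw [Finset.sum_congr rfl hterm, ← Finset.sum_div]
  congr 1
  refine Finset.sum_nbij' (fun j => n - j) (fun k => n - k) ?_ ?_ ?_ ?_ ?_
  · intro j hj
    simp only [Finset.mem_Icc] at hj
    simp only [Finset.mem_range]
    omega
  · intro k hk
    simp only [Finset.mem_range] at hk
    simp only [Finset.mem_Icc]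
    omega
  · intro j hj
    simp only [Finset.mem_Icc] at hj
    show n - (n - j) = j
    omega
  · intro k hk
    simp only [Finset.mem_range] at hk
    show n - (n - k) = k
    omega
  · intro j hj
    simp only [Finset.mem_Icc] at hj
    rw [Nat.sub_sub_self hj.2]

lemma two_rpow_le : (2:ℝ) ^ ((3:ℝ)/2) ≤ 3 := by
  have h8 : (2:ℝ) ^ ((3:ℝ)/2) = Real.sqrt 8 := by
    rw [show ((3:ℝ)/2) = (3:ℕ) * (1/2 : ℝ) by norm_num, Real.rpow_mul (by norm_num),
      Real.rpow_natCast, ← Real.sqrt_eq_rpow]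
    norm_num
  rw [h8]
  calc Real.sqrt 8 ≤ Real.sqrt 9 := Real.sqrt_le_sqrt (by norm_num)
  _ = 3 := by rw [show (9:ℝ) = 3^2 by norm_num, Real.sqrt_sq (by norm_num)]

lemma gt_tsum_exp : ∑' k : ℕ, ((1/8:ℝ)^k / (k.factorial : ℝ)) = Real.exp (1/8) := by
  rw [Real.exp_eq_exp_ℝ, NormedSpace.exp_eq_tsum_div]

lemma gt_lim (GT : ℕ → ℝ) (h : Tendsto (fun ℓ => GT ℓ / gtD ℓ) atTop (nhds 1)) (k : ℕ) :
    Tendsto (fun n => gtF GT n k) atTop (nhds ((1/8 : ℝ)^k / (k.factorial : ℝ))) := by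
  have hA : Tendsto (fun n : ℕ => GT (n - k) / gtD (n - k)) atTop (nhds 1) :=
    h.comp (tendsto_sub_atTop_nat k)
  have hm : Tendsto (fun n : ℕ => ((n - k : ℕ) : ℝ)) atTop atTop :=
    tendsto_natCast_atTop_atTop.comp (tendsto_sub_atTop_nat k)
  have h0 : Tendsto (fun n : ℕ => (k:ℝ)/((n - k : ℕ):ℝ)) atTop (nhds 0) :=
    tendsto_const_nhds.div_atTop hm
  have hB : Tendsto (fun n : ℕ => (n:ℝ)/((n - k:ℕ):ℝ)) atTop (nhds 1) := by
    have h1 : Tendsto (fun n : ℕ => 1 + (k:ℝ)/((n-k:ℕ):ℝ)) atTop (nhds (1+0)) :=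
      tendsto_const_nhds.add h0
    rw [add_zero] at h1
    refine h1.congr' ?_
    filter_upwards [eventually_ge_atTop (k+1)] with n hn
    have hkn : k ≤ n := by omega
    have hj : (0:ℝ) < ((n - k:ℕ):ℝ) := by exact_mod_cast (show 0 < n - k by omega)
    rw [Nat.cast_sub hkn]
    rw [Nat.cast_sub hkn] at hj
    field_simp
    ring
  have hC : Tendsto (fun n : ℕ => ((n:ℝ)/((n - k:ℕ):ℝ)) ^ ((3:ℝ)/2)) atTop (nhds 1) := by
    have := hB.rpow_const (p := (3:ℝ)/2) (Or.inr (by norm_num))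
    simpa using this
  have hprod : Tendsto (fun n : ℕ => (GT (n-k)/gtD (n-k)) *
      (((n:ℝ)/((n-k:ℕ):ℝ))^((3:ℝ)/2) * (1/8:ℝ)^k / (k.factorial : ℝ)))
      atTop (nhds ((1/8:ℝ)^k / (k.factorial : ℝ))) := by
    have := hA.mul ((hC.mul_const ((1/8:ℝ)^k)).div_const (k.factorial:ℝ))
    simpa using this
  refine Tendsto.congr' ?_ hprod
  filter_upwards [eventually_gt_atTop k] with n hn
  simp only [gtF, if_pos hn]
  have hkey := gt_key n k hn
  have hdj := gtD_pos (show 1 ≤ n - k by omega)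
  have hdn := gtD_pos (show 1 ≤ n by omega)
  rw [← hkey]
  field_simp

lemma gt_Q_bound (n k : ℕ) (hk : k < n) :
    ((n:ℝ)/((n-k:ℕ):ℝ))^((3:ℝ)/2) ≤ 3 + 4*(k:ℝ)^2 := by
  have hjpos : (0:ℝ) < ((n-k:ℕ):ℝ) := by exact_mod_cast (show 0 < n - k by omega)
  have hnn : (0:ℝ) ≤ (n:ℝ)/((n-k:ℕ):ℝ) := by positivity
  have hk2 : (0:ℝ) ≤ 4*(k:ℝ)^2 := by positivity
  rcases le_or_gt n (2*(n-k)) with hcase | hcase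
  · have hle : (n:ℝ)/((n-k:ℕ):ℝ) ≤ 2 := by
      rw [div_le_iff₀ hjpos]
      exact_mod_cast hcase
    calc ((n:ℝ)/((n-k:ℕ):ℝ))^((3:ℝ)/2) ≤ (2:ℝ)^((3:ℝ)/2) :=
          Real.rpow_le_rpow hnn hle (by norm_num)
      _ ≤ 3 := two_rpow_le
      _ ≤ 3 + 4*(k:ℝ)^2 := by linarith
  · have hk1 : 1 ≤ k := by omega
    have h2k : (n:ℝ) ≤ 2*(k:ℝ) := by exact_mod_cast (show n ≤ 2*k by omega)
    have hone : (1:ℝ) ≤ ((n-k:ℕ):ℝ) := by exact_mod_cast (show 1 ≤ n - k by omega)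
    have hle : (n:ℝ)/((n-k:ℕ):ℝ) ≤ 2*(k:ℝ) :=
      (div_le_self (by positivity) hone).trans h2k
    have h1le : (1:ℝ) ≤ 2*(k:ℝ) := by
      have : (1:ℝ) ≤ (k:ℝ) := by exact_mod_cast hk1
      linarith
    calc ((n:ℝ)/((n-k:ℕ):ℝ))^((3:ℝ)/2) ≤ (2*(k:ℝ))^((3:ℝ)/2) :=
          Real.rpow_le_rpow hnn hle (by norm_num)
      _ ≤ (2*(k:ℝ))^((2:ℝ)) := Real.rpow_le_rpow_of_exponent_le h1le (by norm_num)
      _ = (2*(k:ℝ))^(2:ℕ) := by rw [← Real.rpow_natCast (2*(k:ℝ)) 2]; norm_num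
      _ ≤ 3 + 4*(k:ℝ)^2 := by ring_nf; nlinarith

lemma gt_bound (GT : ℕ → ℝ) (M : ℝ) (hM0 : 0 ≤ M)
    (hM : ∀ ℓ, 1 ≤ ℓ → |GT ℓ| ≤ M * gtD ℓ) (n k : ℕ) :
    |gtF GT n k| ≤ 3*M*(1/8:ℝ)^k + 4*M*((k:ℝ)^2 * (1/8:ℝ)^k) := by
  rcases lt_or_ge k n with hk | hk
  · have hdn := gtD_pos (show 1 ≤ n by omega)
    have hdj := gtD_pos (show 1 ≤ n - k by omega)
    have hch : (0:ℝ) ≤ (n.choose (n-k):ℝ) := by positivity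
    have h1 : |gtF GT n k| = (n.choose (n-k) : ℝ) * |GT (n-k)| / gtD n := by
      simp only [gtF, if_pos hk]
      rw [abs_div, abs_of_pos hdn, abs_mul, abs_of_nonneg hch]
    rw [h1]
    have h2 : (n.choose (n-k):ℝ) * |GT (n-k)| / gtD n
        ≤ M * ((n.choose (n-k):ℝ) * gtD (n-k) / gtD n) := by
      have hle := hM (n-k) (by omega)
      calc (n.choose (n-k):ℝ) * |GT (n-k)| / gtD n
          ≤ (n.choose (n-k):ℝ) * (M * gtD (n-k)) / gtD n := by gcongr
        _ = M * ((n.choose (n-k):ℝ) * gtD (n-k) / gtD n) := by ring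
    rw [gt_key n k hk] at h2
    refine h2.trans ?_
    have hQ := gt_Q_bound n k hk
    have hQ0 : (0:ℝ) ≤ ((n:ℝ)/((n-k:ℕ):ℝ))^((3:ℝ)/2) := by positivity
    have hfact : (1:ℝ) ≤ (k.factorial : ℝ) := by exact_mod_cast k.factorial_pos
    have step1 : ((n:ℝ)/((n-k:ℕ):ℝ))^((3:ℝ)/2) * (1/8:ℝ)^k / (k.factorial:ℝ)
        ≤ ((n:ℝ)/((n-k:ℕ):ℝ))^((3:ℝ)/2) * (1/8:ℝ)^k :=
      div_le_self (by positivity) hfact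
    have step2 : ((n:ℝ)/((n-k:ℕ):ℝ))^((3:ℝ)/2) * (1/8:ℝ)^k
        ≤ (3 + 4*(k:ℝ)^2) * (1/8:ℝ)^k := by gcongr
    calc M * (((n:ℝ)/((n-k:ℕ):ℝ))^((3:ℝ)/2) * (1/8:ℝ)^k / (k.factorial:ℝ))
        ≤ M * ((3 + 4*(k:ℝ)^2) * (1/8:ℝ)^k) :=
          mul_le_mul_of_nonneg_left (step1.trans step2) hM0
      _ = 3*M*(1/8:ℝ)^k + 4*M*((k:ℝ)^2 * (1/8:ℝ)^k) := by ring
  · simp only [gtF, if_neg (by omega : ¬ k < n), abs_zero]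
    positivity

theorem galled_trees_subset_sum_asymptotics (GT : ℕ → ℝ)
    (h : Tendsto (fun ℓ : ℕ => GT ℓ /
        (Real.sqrt 17 * (Real.sqrt 17 - 1) / (136 * Real.sqrt Real.pi) *
          (ℓ : ℝ) ^ (-(3 : ℝ) / 2) * 8 ^ ℓ * ℓ.factorial)) atTop (nhds 1)) :
    Tendsto (fun n : ℕ =>
        (∑ j ∈ Finset.Icc 1 n, (n.choose j : ℝ) * GT j) /
        (Real.sqrt 17 * (Real.sqrt 17 - 1) / (136 * Real.sqrt Real.pi) * Real.exp (1/8) *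
          (n : ℝ) ^ (-(3 : ℝ) / 2) * 8 ^ n * n.factorial)) atTop (nhds 1) := by
  have hd : Tendsto (fun ℓ : ℕ => GT ℓ / gtD ℓ) atTop (nhds 1) := h
  obtain ⟨N, hN⟩ := Metric.tendsto_atTop.mp hd 1 one_pos
  set M : ℝ := 2 + ∑ ℓ ∈ Finset.Icc 1 N, |GT ℓ| / gtD ℓ with hMdef
  have hsum_nonneg : 0 ≤ ∑ ℓ ∈ Finset.Icc 1 N, |GT ℓ| / gtD ℓ :=
    Finset.sum_nonneg fun ℓ hℓ => by
      have := gtD_pos (Finset.mem_Icc.mp hℓ).1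
      positivity
  have hM2 : (2:ℝ) ≤ M := by rw [hMdef]; linarith
  have hM0 : (0:ℝ) ≤ M := by linarith
  have hM : ∀ ℓ, 1 ≤ ℓ → |GT ℓ| ≤ M * gtD ℓ := by
    intro ℓ hℓ
    have hdℓ := gtD_pos hℓ
    rcases le_or_gt N ℓ with hc | hc
    · have hdist := hN ℓ hc
      rw [Real.dist_eq] at hdist
      have habs : |GT ℓ / gtD ℓ| ≤ 2 := by
        calc |GT ℓ / gtD ℓ| = |(GT ℓ / gtD ℓ - 1) + 1| := by ring_nf
          _ ≤ |GT ℓ / gtD ℓ - 1| + |1| := abs_add_le _ _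
          _ ≤ 2 := by rw [abs_one]; linarith
      rw [abs_div, abs_of_pos hdℓ, div_le_iff₀ hdℓ] at habs
      calc |GT ℓ| ≤ 2 * gtD ℓ := habs
        _ ≤ M * gtD ℓ := mul_le_mul_of_nonneg_right hM2 hdℓ.le
    · have hmem : ℓ ∈ Finset.Icc 1 N := Finset.mem_Icc.mpr ⟨hℓ, hc.le⟩
      have hle : |GT ℓ| / gtD ℓ ≤ ∑ i ∈ Finset.Icc 1 N, |GT i| / gtD i :=
        Finset.single_le_sum (f := fun i => |GT i| / gtD i) (fun i hi => by
          have := gtD_pos (Finset.mem_Icc.mp hi).1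
          positivity) hmem
      have hle2 : |GT ℓ| / gtD ℓ ≤ M := by rw [hMdef]; linarith
      rw [div_le_iff₀ hdℓ] at hle2
      exact hle2
  have hsummable : Summable (fun k : ℕ => 3*M*(1/8:ℝ)^k + 4*M*((k:ℝ)^2 * (1/8:ℝ)^k)) := by
    exact Summable.add
      ((summable_geometric_of_lt_one (r := (1/8:ℝ)) (by norm_num) (by norm_num)).mul_left (3*M))
      ((summable_pow_mul_geometric_of_norm_lt_one 2
        (by rw [Real.norm_eq_abs, abs_of_nonneg (by norm_num : (0:ℝ) ≤ 1/8)]; norm_num :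
          ‖(1/8:ℝ)‖ < 1)).mul_left (4*M))
  have hmain : Tendsto (fun n => ∑' k, gtF GT n k) atTop (nhds (Real.exp (1/8))) := by
    rw [← gt_tsum_exp]
    exact tendsto_tsum_of_dominated_convergence hsummable (gt_lim GT hd)
      (Eventually.of_forall fun n k => by
        rw [Real.norm_eq_abs]; exact gt_bound GT M hM0 hM n k)
  have heq : ∀ n : ℕ,
      (∑' k, gtF GT n k) / Real.exp (1/8) =
      (∑ j ∈ Finset.Icc 1 n, (n.choose j : ℝ) * GT j) /
        (Real.sqrt 17 * (Real.sqrt 17 - 1) / (136 * Real.sqrt Real.pi) * Real.exp (1/8) *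
          (n : ℝ) ^ (-(3 : ℝ) / 2) * 8 ^ n * n.factorial) := by
    intro n
    rw [← gt_sum_eq GT n, div_div]
    congr 1
    unfold gtD gtC
    ring
  have hfinal := hmain.div_const (Real.exp (1/8))
  rw [div_self (Real.exp_ne_zero _)] at hfinal
  exact hfinal.congr heq
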